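/- Let n ≥ 1 be an integer and let β > 3 + 2√2. Then the smooth sensitivity of the Gini impurity at support size n with minimum support 1 equals its local sensitivity: sup_{k ∈ ℕ} e^{−βk}·g(max(1, n − k)) = g(n). -/
import Mathlib


/-- Local sensitivity of the Gini impurity as a function of the support size. -/
noncomputable def g (x : ℝ) : ℝ := 1 - (x / (x + 1))^2 - (1 / (x + 1))^2

lemma g_eq (x : ℝ) (hx : 0 < x + 1) : g x = 2 * x / (x + 1)^2 := by
  unfold g
  field_simp
  ring

lemma sq_le_six_pow : ∀ k : ℕ, ((k : ℝ) + 1)^2 ≤ 6 ^ k := by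
  intro k
  induction k with
  | zero => norm_num
  | succ m ih =>
      have hm : (0:ℝ) ≤ m := Nat.cast_nonneg m
      have h6 : (6:ℝ)^(m+1) = 6 * 6^m := by rw [pow_succ]; ring
      rw [h6]
      push_cast
      nlinarith [ih, sq_nonneg ((m:ℝ))]

theorem smooth_sensitivity_eq_local_large_beta (n : ℤ) (hn : 1 ≤ n) (β : ℝ)
    (hβ : 3 + 2 * Real.sqrt 2 < β) :
    (⨆ k : ℕ, Real.exp (-β * (k : ℝ)) * g (max (1 : ℝ) ((n : ℝ) - (k : ℝ)))) = g (n : ℝ) := by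
  have hs2 : (1:ℝ) < Real.sqrt 2 := by
    nlinarith [Real.sq_sqrt (by norm_num : (0:ℝ) ≤ 2), Real.sqrt_nonneg 2]
  have hβ5 : (5:ℝ) < β := by linarith
  have hn1 : (1:ℝ) ≤ (n:ℝ) := by exact_mod_cast hn
  have hn0 : (0:ℝ) < (n:ℝ) + 1 := by linarith
  -- exp lower bounds
  have hE1 : ∀ k : ℕ, ((k:ℝ) + 1)^2 ≤ Real.exp (β * k) := by
    intro k
    have h6 : (6:ℝ) ≤ Real.exp β := by
      have := Real.add_one_le_exp β
      linarith
    calc ((k:ℝ)+1)^2 ≤ 6 ^ k := sq_le_six_pow k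
      _ ≤ (Real.exp β) ^ k := pow_le_pow_left₀ (by norm_num) h6 k
      _ = Real.exp (β * k) := by
          rw [← Real.exp_nat_mul]; ring_nf
  have hE2 : ∀ k : ℕ, ((k:ℝ) + 2) / 2 ≤ Real.exp (β * k) := by
    intro k
    have hk : (0:ℝ) ≤ (k:ℝ) := Nat.cast_nonneg k
    have := Real.add_one_le_exp (β * k)
    nlinarith
  -- key pointwise bound
  have key : ∀ k : ℕ, Real.exp (-β * (k : ℝ)) * g (max (1 : ℝ) ((n : ℝ) - (k : ℝ))) ≤ g (n : ℝ) := by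
    intro k
    have hexp : (0:ℝ) < Real.exp (β * k) := Real.exp_pos _
    rw [show -β * (k:ℝ) = -(β * k) by ring, Real.exp_neg,
      inv_mul_le_iff₀ hexp]
    have hk : (0:ℝ) ≤ (k:ℝ) := Nat.cast_nonneg k
    rw [g_eq _ hn0]
    rcases le_or_gt ((n:ℝ) - k) 1 with h | h
    · rw [max_eq_left h]
      have hg1 : g 1 = 1/2 := by unfold g; norm_num
      rw [hg1]
      have h2 : ((k:ℝ) + 2)/2 ≤ Real.exp (β * k) := hE2 k
      rw [show Real.exp (β * k) * (2 * (n:ℝ) / ((n:ℝ)+1)^2)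
            = Real.exp (β * k) * (2 * (n:ℝ)) / ((n:ℝ)+1)^2 by ring,
        le_div_iff₀ (by positivity)]
      nlinarith [h2, hn1, hk, h, hexp]
    · rw [max_eq_right h.le]
      set a : ℝ := (n:ℝ) - k with ha
      have ha1 : (1:ℝ) < a := h
      have ha0 : (0:ℝ) < a + 1 := by linarith
      rw [g_eq _ ha0]
      rw [show Real.exp (β * k) * (2 * (n:ℝ) / ((n:ℝ)+1)^2)
            = Real.exp (β * k) * (2 * (n:ℝ)) / ((n:ℝ)+1)^2 by ring,
        div_le_div_iff₀ (by positivity) (by positivity)]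
      -- 2*a*(n+1)^2 ≤ exp(βk)*2*n*(a+1)^2
      have hstep : (n:ℝ) + 1 ≤ ((k:ℝ)+1) * (a+1) := by
        have hna : (n:ℝ) + 1 = a + 1 + k := by rw [ha]; ring
        nlinarith
      have hsq : ((n:ℝ)+1)^2 ≤ ((k:ℝ)+1)^2 * (a+1)^2 := by
        nlinarith [hstep, hn0]
      have hE := hE1 k
      have han : a ≤ (n:ℝ) := by rw [ha]; linarith
      have h1 : a * ((k:ℝ)+1)^2 ≤ (n:ℝ) * Real.exp (β * k) :=
        mul_le_mul han hE (by positivity) (by linarith)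
      have h2 : a * ((k:ℝ)+1)^2 * (2*(a+1)^2) ≤ (n:ℝ) * Real.exp (β * k) * (2*(a+1)^2) :=
        mul_le_mul_of_nonneg_right h1 (by positivity)
      have h3 : 2 * a * ((n:ℝ)+1)^2 ≤ 2 * a * (((k:ℝ)+1)^2 * (a+1)^2) :=
        mul_le_mul_of_nonneg_left hsq (by linarith)
      nlinarith [h2, h3]
  apply le_antisymm
  · exact ciSup_le key
  · have hb : BddAbove (Set.range fun k : ℕ => Real.exp (-β * (k : ℝ)) * g (max (1 : ℝ) ((n : ℝ) - (k : ℝ)))) := by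
      refine ⟨g (n:ℝ), ?_⟩
      rintro _ ⟨k, rfl⟩
      exact key k
    have h0 := le_ciSup hb 0
    simpa [max_eq_right hn1] using h0
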